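/- Let ν be a Borel probability measure on the product space ({0,1}^ℤ) × ({0,1}^ℤ) (product topology), let l ≥ 1 be an integer and m ≤ n integers, and suppose that ∫ Ω̃ g^l_{m,n} dν = 0 (the invariance identity for the cylinder function g^l_{m,n} under the basic coupling). Then ε · ∫ g^{l+1}_{m,n} dν ≤ (4 K l + 2 ε) · ∫ g^l_{m,n} dν. -/

import Mathlib

/-- `ξ` has a maximal `l`-run of sign `s` at `a` within `[m, n]`:
`ξ (a+i) = s` for `0 ≤ i ≤ l-1`, `ξ (a-1) ≠ s`, `ξ (a+l) ≠ s`, `m ≤ a`, `a+l-1 ≤ n`. -/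
def IsMaxRun (ξ : ℤ → ℤ) (l m n a s : ℤ) : Prop :=
  (∀ i : ℤ, 0 ≤ i → i ≤ l - 1 → ξ (a + i) = s) ∧
    ξ (a - 1) ≠ s ∧ ξ (a + l) ≠ s ∧ m ≤ a ∧ a + l - 1 ≤ n

/-- `g^l_{m,n}(ξ)`: the number of pairs `(a, s)` with `s ∈ {−1, 1}` such that
`ξ` has a maximal `l`-run of sign `s` at `a` within `[m, n]`. -/
noncomputable def runCount (l m n : ℤ) (ξ : ℤ → ℤ) : ℕ :=
  Set.ncard {p : ℤ × ℤ | (p.2 = 1 ∨ p.2 = -1) ∧ IsMaxRun ξ l m n p.1 p.2}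

/-- Flip the spin of `η` at site `x`. -/
def flipAt (η : ℤ → Bool) (x : ℤ) : ℤ → Bool := Function.update η x (!η x)

/-- The discrepancy configuration `ξ_{η,ζ}(x) = η(x) − ζ(x)` with values in `{−1,0,1}`. -/
def discrep (η ζ : ℤ → Bool) : ℤ → ℤ :=
  fun x => (if η x then 1 else 0) - (if ζ x then 1 else 0)

/-- `g^l_{m,n}(η, ζ) = g^l_{m,n}(ξ_{η,ζ})`. -/
noncomputable def gPair (l m n : ℤ) (η ζ : ℤ → Bool) : ℕ :=
  runCount l m n (discrep η ζ)

/-- The nearest-neighbor flip rate `c(x, η) = F(η(x−1), η(x), η(x+1))`. -/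
def rate (F : Bool → Bool → Bool → ℝ) (x : ℤ) (η : ℤ → Bool) : ℝ :=
  F (η (x - 1)) (η x) (η (x + 1))

/-- The basic-coupling generator applied to `g^l_{m,n}`, written as a finite
sum over the sites `x ∈ [m−1, n+1]` (flips at other sites do not change `g^l_{m,n}`). -/
noncomputable def omegaG (F : Bool → Bool → Bool → ℝ) (l m n : ℤ) (η ζ : ℤ → Bool) : ℝ :=
  ∑ x ∈ Finset.Icc (m - 1) (n + 1),
    ((min (rate F x η) (rate F x ζ)) *
        ((gPair l m n (flipAt η x) (flipAt ζ x) : ℝ) - (gPair l m n η ζ : ℝ)) +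
      (rate F x η - min (rate F x η) (rate F x ζ)) *
        ((gPair l m n (flipAt η x) ζ : ℝ) - (gPair l m n η ζ : ℝ)) +
      (rate F x ζ - min (rate F x η) (rate F x ζ)) *
        ((gPair l m n η (flipAt ζ x) : ℝ) - (gPair l m n η ζ : ℝ)))

open Finset

noncomputable def runFinset (l m n : ℤ) (ξ : ℤ → ℤ) : Finset (ℤ × ℤ) :=
  @Finset.filter _ (fun p => IsMaxRun ξ l m n p.1 p.2) (Classical.decPred _)
    (Finset.Icc m n ×ˢ ({1, -1} : Finset ℤ))

lemma mem_runFinset {l m n : ℤ} (hl : 1 ≤ l) {ξ : ℤ → ℤ} {p : ℤ × ℤ} :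
    p ∈ runFinset l m n ξ ↔ (p.2 = 1 ∨ p.2 = -1) ∧ IsMaxRun ξ l m n p.1 p.2 := by
  classical
  simp only [runFinset, Finset.mem_filter, Finset.mem_product, Finset.mem_Icc,
    Finset.mem_insert, Finset.mem_singleton]
  constructor
  · rintro ⟨⟨_, hs⟩, hr⟩; exact ⟨hs, hr⟩
  · rintro ⟨hs, hr⟩
    refine ⟨⟨⟨hr.2.2.2.1, ?_⟩, hs⟩, hr⟩
    have := hr.2.2.2.2; omega

lemma runCount_eq {l m n : ℤ} (hl : 1 ≤ l) (ξ : ℤ → ℤ) :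
    runCount l m n ξ = (runFinset l m n ξ).card := by
  rw [runCount, ← Set.ncard_coe_finset]
  congr 1
  ext p
  simp [mem_runFinset hl]

lemma isMaxRun_of {ξ ξ' : ℤ → ℤ} {l m n a s : ℤ} (h : IsMaxRun ξ l m n a s)
    (hint : ∀ i, 0 ≤ i → i ≤ l - 1 → ξ' (a + i) = ξ (a + i))
    (hb1 : ξ' (a - 1) ≠ s) (hb2 : ξ' (a + l) ≠ s) : IsMaxRun ξ' l m n a s :=
  ⟨fun i h0 h1 => (hint i h0 h1).trans (h.1 i h0 h1), hb1, hb2, h.2.2.2.1, h.2.2.2.2⟩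

/-- survival when the flip site is away from the run window or doesn't hit conditions -/
lemma isMaxRun_update {ξ : ℤ → ℤ} {l m n a s x v : ℤ} (hl : 1 ≤ l) (h : IsMaxRun ξ l m n a s)
    (hx : x < a - 1 ∨ a + l < x ∨ ((x = a - 1 ∨ x = a + l) ∧ v ≠ s)) :
    IsMaxRun (Function.update ξ x v) l m n a s := by
  apply isMaxRun_of h
  · intro i h0 h1
    rw [Function.update_of_ne]
    omega
  · rcases hx with h' | h' | ⟨h', hv⟩
    · rw [Function.update_of_ne (by omega)]; exact h.2.1
    · rw [Function.update_of_ne (by omega)]; exact h.2.1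
    · rcases h' with rfl | h''
      · rwa [Function.update_self]
      · rw [Function.update_of_ne (by omega)]; exact h.2.1
  · rcases hx with h' | h' | ⟨h', hv⟩
    · rw [Function.update_of_ne (by omega)]; exact h.2.2.1
    · rw [Function.update_of_ne (by omega)]; exact h.2.2.1
    · rcases h' with h'' | rfl
      · rw [Function.update_of_ne (by omega)]; exact h.2.2.1
      · rwa [Function.update_self]

def flipVal (b : Bool) : ℤ := if b then 0 else 1
def keepVal (b : Bool) : ℤ := if b then 1 else 0

lemma discrep_flip_both (η ζ : ℤ → Bool) (x : ℤ) :
    discrep (flipAt η x) (flipAt ζ x) = Function.update (discrep η ζ) x (-(discrep η ζ x)) := by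
  funext y
  by_cases h : y = x
  · subst h
    simp only [discrep, flipAt, Function.update_self]
    cases η y <;> cases ζ y <;> simp
  · simp only [discrep, flipAt, Function.update_of_ne h]

lemma discrep_flip_left (η ζ : ℤ → Bool) (x : ℤ) :
    discrep (flipAt η x) ζ = Function.update (discrep η ζ) x (flipVal (η x) - keepVal (ζ x)) := by
  funext y
  by_cases h : y = x
  · subst h
    simp only [discrep, flipAt, flipVal, keepVal, Function.update_self]
    cases η y <;> cases ζ y <;> simp
  · simp only [discrep, flipAt, Function.update_of_ne h]

lemma discrep_flip_right (η ζ : ℤ → Bool) (x : ℤ) :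
    discrep η (flipAt ζ x) = Function.update (discrep η ζ) x (keepVal (η x) - flipVal (ζ x)) := by
  funext y
  by_cases h : y = x
  · subst h
    simp only [discrep, flipAt, flipVal, keepVal, Function.update_self]
    cases η y <;> cases ζ y <;> simp
  · simp only [discrep, flipAt, Function.update_of_ne h]

lemma creation {l m n : ℤ} (hl : 1 ≤ l) {η ζ : ℤ → Bool} {a s : ℤ}
    (h : (a, s) ∈ runFinset (l + 1) m n (discrep η ζ)) :
    (a + 1, s) ∈ runFinset l m n (discrep (flipAt η a) (flipAt ζ a)) ∧
      (a + 1, s) ∉ runFinset l m n (discrep η ζ) ∧ a ∈ Finset.Icc (m - 1) (n + 1) := by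
  rw [mem_runFinset (by omega)] at h
  obtain ⟨hs, hr⟩ := h
  have hs0 : s ≠ 0 := by rcases hs with rfl | rfl <;> omega
  set ξ := discrep η ζ with hξ
  have hxa : ξ a = s := by have := hr.1 0 le_rfl (by omega); simpa using this
  refine ⟨?_, ?_, ?_⟩
  · rw [mem_runFinset hl, discrep_flip_both]
    refine ⟨hs, ?_, ?_, ?_, by have := hr.2.2.2.1; omega, by have := hr.2.2.2.2; omega⟩
    · intro i h0 h1
      rw [Function.update_of_ne (by omega)]
      have := hr.1 (i + 1) (by omega) (by omega)
      rwa [show a + (i + 1) = a + 1 + i by ring] at this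
    · rw [show a + 1 - 1 = a by ring, Function.update_self, ← hξ, hxa]
      intro h'; omega
    · rw [Function.update_of_ne (by omega), show a + 1 + l = a + (l + 1) by ring]
      exact hr.2.2.1
  · rw [mem_runFinset hl]
    rintro ⟨-, hr'⟩
    exact hr'.2.1 (by rwa [show a + 1 - 1 = a by ring])
  · rw [Finset.mem_Icc]
    have h1 := hr.2.2.2.1
    have h2 := hr.2.2.2.2
    omega

lemma card_lower {α : Type*} [DecidableEq α] {S S' : Finset α} {e : α}
    (he : e ∈ S') (he' : e ∉ S) :
    (S.card : ℝ) + 1 - ((S \ S').card : ℝ) ≤ (S'.card : ℝ) := by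
  have h1 : (S ∩ S').card + (S \ S').card = S.card := Finset.card_inter_add_card_sdiff S S'
  have h2 : (insert e (S ∩ S')).card ≤ S'.card := by
    apply Finset.card_le_card
    intro y hy
    rcases Finset.mem_insert.mp hy with rfl | hy'
    · exact he
    · exact (Finset.mem_inter.mp hy').2
  have h3 : (insert e (S ∩ S')).card = (S ∩ S').card + 1 := by
    rw [Finset.card_insert_of_notMem fun hc => he' (Finset.mem_inter.mp hc).1]
  have := h2
  rw [h3] at this
  push_cast
  have : ((S ∩ S').card : ℝ) + 1 ≤ (S'.card : ℝ) := by exact_mod_cast this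
  have h1' : ((S ∩ S').card : ℝ) + ((S \ S').card : ℝ) = (S.card : ℝ) := by exact_mod_cast h1
  linarith

lemma card_lower₀ {α : Type*} [DecidableEq α] (S S' : Finset α) :
    (S.card : ℝ) - ((S \ S').card : ℝ) ≤ (S'.card : ℝ) := by
  have h1 : (S ∩ S').card + (S \ S').card = S.card := Finset.card_inter_add_card_sdiff S S'
  have h2 : (S ∩ S').card ≤ S'.card := Finset.card_le_card (Finset.inter_subset_right)
  have h1' : ((S ∩ S').card : ℝ) + ((S \ S').card : ℝ) = (S.card : ℝ) := by exact_mod_cast h1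
  have h2' : ((S ∩ S').card : ℝ) ≤ (S'.card : ℝ) := by exact_mod_cast h2
  linarith

open Classical in
lemma site_weight {F : Bool → Bool → Bool → ℝ} {ε K : ℝ} (hε : 0 < ε) (hεK : ε ≤ K)
    (hF : ∀ u v w : Bool, ε ≤ F u v w ∧ F u v w ≤ K)
    {l m n a s : ℤ} (hl : 1 ≤ l) (η ζ : ℤ → Bool)
    (hp : (a, s) ∈ runFinset l m n (discrep η ζ)) (x : ℤ) :
    min (rate F x η) (rate F x ζ) *
        (if (a, s) ∈ runFinset l m n (discrep (flipAt η x) (flipAt ζ x)) then (0:ℝ) else 1) +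
      (rate F x η - min (rate F x η) (rate F x ζ)) *
        (if (a, s) ∈ runFinset l m n (discrep (flipAt η x) ζ) then (0:ℝ) else 1) +
      (rate F x ζ - min (rate F x η) (rate F x ζ)) *
        (if (a, s) ∈ runFinset l m n (discrep η (flipAt ζ x)) then (0:ℝ) else 1) ≤
    2 * K * (if x ∈ Finset.Icc a (a + l - 1) then (1:ℝ) else 0) +
      K * (if x = a - 1 then (1:ℝ) else 0) + K * (if x = a + l then (1:ℝ) else 0) := by
  obtain ⟨hs, ha⟩ := (mem_runFinset hl).mp hp
  have hs0 : s ≠ 0 := by rcases hs with h | h <;> simp at h <;> omega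
  obtain ⟨hη1, hη2⟩ := hF (η (x - 1)) (η x) (η (x + 1))
  obtain ⟨hζ1, hζ2⟩ := hF (ζ (x - 1)) (ζ x) (ζ (x + 1))
  have hη1' : ε ≤ rate F x η := hη1
  have hη2' : rate F x η ≤ K := hη2
  have hζ1' : ε ≤ rate F x ζ := hζ1
  have hζ2' : rate F x ζ ≤ K := hζ2
  have hmin1 : ε ≤ min (rate F x η) (rate F x ζ) := le_min hη1' hζ1'
  have hmin2 : min (rate F x η) (rate F x ζ) ≤ K := (min_le_left _ _).trans hη2'
  have hminη : min (rate F x η) (rate F x ζ) ≤ rate F x η := min_le_left _ _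
  have hminζ : min (rate F x η) (rate F x ζ) ≤ rate F x ζ := min_le_right _ _
  by_cases hout : x < a - 1 ∨ a + l < x
  · have hx' : ∀ v : ℤ, x < a - 1 ∨ a + l < x ∨ ((x = a - 1 ∨ x = a + l) ∧ v ≠ s) := by
      intro v
      rcases hout with h | h
      · exact Or.inl h
      · exact Or.inr (Or.inl h)
    have m₁ : (a, s) ∈ runFinset l m n (discrep (flipAt η x) (flipAt ζ x)) := by
      rw [mem_runFinset hl, discrep_flip_both]
      exact ⟨hs, isMaxRun_update hl ha (hx' _)⟩
    have m₂ : (a, s) ∈ runFinset l m n (discrep (flipAt η x) ζ) := by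
      rw [mem_runFinset hl, discrep_flip_left]
      exact ⟨hs, isMaxRun_update hl ha (hx' _)⟩
    have m₃ : (a, s) ∈ runFinset l m n (discrep η (flipAt ζ x)) := by
      rw [mem_runFinset hl, discrep_flip_right]
      exact ⟨hs, isMaxRun_update hl ha (hx' _)⟩
    rw [if_pos m₁, if_pos m₂, if_pos m₃, mul_zero, mul_zero, mul_zero, add_zero, add_zero]
    have : (0:ℝ) ≤ 2 * K * (if x ∈ Finset.Icc a (a + l - 1) then (1:ℝ) else 0) +
        K * (if x = a - 1 then (1:ℝ) else 0) + K * (if x = a + l then (1:ℝ) else 0) := by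
      have hK : (0:ℝ) ≤ K := le_trans (le_of_lt hε) hεK
      apply add_nonneg
      apply add_nonneg
      all_goals apply mul_nonneg (by positivity)
      all_goals split <;> norm_num
    linarith
  · have hbRHS : K ≤ 2 * K * (if x ∈ Finset.Icc a (a + l - 1) then (1:ℝ) else 0) +
        K * (if x = a - 1 then (1:ℝ) else 0) + K * (if x = a + l then (1:ℝ) else 0) → True := fun _ => trivial
    have hK : (0:ℝ) ≤ K := le_trans (le_of_lt hε) hεK
    have hnonneg : (0:ℝ) ≤ 2 * K * (if x ∈ Finset.Icc a (a + l - 1) then (1:ℝ) else 0) := by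
      apply mul_nonneg (by positivity); split <;> norm_num
    by_cases hb : x = a - 1 ∨ x = a + l
    · -- boundary site
      have hRHS : K ≤ 2 * K * (if x ∈ Finset.Icc a (a + l - 1) then (1:ℝ) else 0) +
          K * (if x = a - 1 then (1:ℝ) else 0) + K * (if x = a + l then (1:ℝ) else 0) := by
        rcases hb with rfl | rfl
        · rw [if_pos rfl]
          have : (0:ℝ) ≤ K * (if (a - 1 : ℤ) = a + l then (1:ℝ) else 0) := by
            apply mul_nonneg hK; split <;> norm_num
          linarith
        · rw [if_pos rfl]
          have : (0:ℝ) ≤ K * (if (a + l : ℤ) = a - 1 then (1:ℝ) else 0) := by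
            apply mul_nonneg hK; split <;> norm_num
          linarith
      by_cases h0 : discrep η ζ x = 0
      · have m₁ : (a, s) ∈ runFinset l m n (discrep (flipAt η x) (flipAt ζ x)) := by
          have heq : discrep (flipAt η x) (flipAt ζ x) = discrep η ζ := by
            rw [discrep_flip_both, h0, neg_zero, ← h0, Function.update_eq_self]
          rw [heq]; exact hp
        rw [if_pos m₁, mul_zero, zero_add]
        have hb1 : (rate F x η - min (rate F x η) (rate F x ζ)) *
            (if (a, s) ∈ runFinset l m n (discrep (flipAt η x) ζ) then (0:ℝ) else 1) ≤
            rate F x η - min (rate F x η) (rate F x ζ) := by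
          nth_rewrite 2 [← mul_one (rate F x η - min (rate F x η) (rate F x ζ))]
          apply mul_le_mul_of_nonneg_left _ (by linarith)
          split <;> norm_num
        have hb2 : (rate F x ζ - min (rate F x η) (rate F x ζ)) *
            (if (a, s) ∈ runFinset l m n (discrep η (flipAt ζ x)) then (0:ℝ) else 1) ≤
            rate F x ζ - min (rate F x η) (rate F x ζ) := by
          nth_rewrite 2 [← mul_one (rate F x ζ - min (rate F x η) (rate F x ζ))]
          apply mul_le_mul_of_nonneg_left _ (by linarith)
          split <;> norm_num
        have hsum : rate F x η - min (rate F x η) (rate F x ζ) +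
            (rate F x ζ - min (rate F x η) (rate F x ζ)) ≤ K := by
          rcases le_total (rate F x η) (rate F x ζ) with h | h
          · rw [min_eq_left h]; linarith
          · rw [min_eq_right h]; linarith
        linarith
      · -- discrepancy at x, single flips null it
        have hηζ : η x ≠ ζ x := by
          intro h; apply h0; simp [discrep, h]
        have hv1 : flipVal (η x) - keepVal (ζ x) = 0 := by
          revert hηζ; cases η x <;> cases ζ x <;> simp [flipVal, keepVal]
        have hv2 : keepVal (η x) - flipVal (ζ x) = 0 := by
          revert hηζ; cases η x <;> cases ζ x <;> simp [flipVal, keepVal]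
        have hcond : x < a - 1 ∨ a + l < x ∨ ((x = a - 1 ∨ x = a + l) ∧ (0:ℤ) ≠ s) :=
          Or.inr (Or.inr ⟨hb, fun h => hs0 h.symm⟩)
        have m₂ : (a, s) ∈ runFinset l m n (discrep (flipAt η x) ζ) := by
          rw [mem_runFinset hl, discrep_flip_left, hv1]
          exact ⟨hs, isMaxRun_update hl ha hcond⟩
        have m₃ : (a, s) ∈ runFinset l m n (discrep η (flipAt ζ x)) := by
          rw [mem_runFinset hl, discrep_flip_right, hv2]
          exact ⟨hs, isMaxRun_update hl ha hcond⟩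
        rw [if_pos m₂, if_pos m₃, mul_zero, mul_zero, add_zero, add_zero]
        have : min (rate F x η) (rate F x ζ) *
            (if (a, s) ∈ runFinset l m n (discrep (flipAt η x) (flipAt ζ x)) then (0:ℝ) else 1) ≤
            min (rate F x η) (rate F x ζ) := by
          nth_rewrite 2 [← mul_one (min (rate F x η) (rate F x ζ))]
          apply mul_le_mul_of_nonneg_left _ (by linarith)
          split <;> norm_num
        linarith
    · -- interior site
      have hint : x ∈ Finset.Icc a (a + l - 1) := by
        rw [Finset.mem_Icc]; omega
      rw [if_pos hint, mul_one]
      have c1 : min (rate F x η) (rate F x ζ) *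
          (if (a, s) ∈ runFinset l m n (discrep (flipAt η x) (flipAt ζ x)) then (0:ℝ) else 1) ≤
          min (rate F x η) (rate F x ζ) := by
        nth_rewrite 2 [← mul_one (min (rate F x η) (rate F x ζ))]
        apply mul_le_mul_of_nonneg_left _ (by linarith)
        split <;> norm_num
      have c2 : (rate F x η - min (rate F x η) (rate F x ζ)) *
          (if (a, s) ∈ runFinset l m n (discrep (flipAt η x) ζ) then (0:ℝ) else 1) ≤
          rate F x η - min (rate F x η) (rate F x ζ) := by
        nth_rewrite 2 [← mul_one (rate F x η - min (rate F x η) (rate F x ζ))]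
        apply mul_le_mul_of_nonneg_left _ (by linarith)
        split <;> norm_num
      have c3 : (rate F x ζ - min (rate F x η) (rate F x ζ)) *
          (if (a, s) ∈ runFinset l m n (discrep η (flipAt ζ x)) then (0:ℝ) else 1) ≤
          rate F x ζ - min (rate F x η) (rate F x ζ) := by
        nth_rewrite 2 [← mul_one (rate F x ζ - min (rate F x η) (rate F x ζ))]
        apply mul_le_mul_of_nonneg_left _ (by linarith)
        split <;> norm_num
      have e1 : (0:ℝ) ≤ K * (if x = a - 1 then (1:ℝ) else 0) := by
        apply mul_nonneg hK; split <;> norm_num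
      have e2 : (0:ℝ) ≤ K * (if x = a + l then (1:ℝ) else 0) := by
        apply mul_nonneg hK; split <;> norm_num
      linarith

open Classical in
lemma weight_sum {K : ℝ} (hK : 0 ≤ K) {l m n a : ℤ} (hl : 1 ≤ l) :
    ∑ x ∈ Finset.Icc (m - 1) (n + 1),
      (2 * K * (if x ∈ Finset.Icc a (a + l - 1) then (1:ℝ) else 0) +
        K * (if x = a - 1 then (1:ℝ) else 0) + K * (if x = a + l then (1:ℝ) else 0)) ≤
    2 * K * (l : ℝ) + 2 * K := by
  rw [Finset.sum_add_distrib, Finset.sum_add_distrib, ← Finset.mul_sum, ← Finset.mul_sum,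
    ← Finset.mul_sum]
  have h1 : ∑ x ∈ Finset.Icc (m - 1) (n + 1),
      (if x ∈ Finset.Icc a (a + l - 1) then (1:ℝ) else 0) ≤ (l : ℝ) := by
    rw [Finset.sum_boole]
    have hsub : ((Finset.Icc (m - 1) (n + 1)).filter (fun x => x ∈ Finset.Icc a (a + l - 1))).card
        ≤ (Finset.Icc a (a + l - 1)).card :=
      Finset.card_le_card fun y hy => (Finset.mem_filter.mp hy).2
    have hcard : (Finset.Icc a (a + l - 1)).card = l.toNat := by
      rw [Int.card_Icc]; congr 1; ring
    rw [hcard] at hsub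
    calc (((Finset.Icc (m - 1) (n + 1)).filter
          (fun x => x ∈ Finset.Icc a (a + l - 1))).card : ℝ) ≤ (l.toNat : ℝ) := by
            exact_mod_cast hsub
      _ = (l : ℝ) := by
            exact_mod_cast congrArg (Int.cast : ℤ → ℝ)
              (Int.toNat_of_nonneg (show (0:ℤ) ≤ l by omega))
  have h2 : ∑ x ∈ Finset.Icc (m - 1) (n + 1), (if x = a - 1 then (1:ℝ) else 0) ≤ 1 := by
    rw [Finset.sum_ite_eq']
    split <;> norm_num
  have h3 : ∑ x ∈ Finset.Icc (m - 1) (n + 1), (if x = a + l then (1:ℝ) else 0) ≤ 1 := by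
    rw [Finset.sum_ite_eq']
    split <;> norm_num
  have g1 := mul_le_mul_of_nonneg_left h1 (by linarith : (0:ℝ) ≤ 2 * K)
  have g2 := mul_le_mul_of_nonneg_left h2 hK
  have g3 := mul_le_mul_of_nonneg_left h3 hK
  linarith

open Classical in
lemma pointwise_bound {F : Bool → Bool → Bool → ℝ} {ε K : ℝ} (hε : 0 < ε) (hεK : ε ≤ K)
    (hF : ∀ u v w : Bool, ε ≤ F u v w ∧ F u v w ≤ K) {l m n : ℤ} (hl : 1 ≤ l)
    (η ζ : ℤ → Bool) :
    ε * (gPair (l + 1) m n η ζ : ℝ) - (2 * K * (l : ℝ) + 2 * K) * (gPair l m n η ζ : ℝ) ≤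
      omegaG F l m n η ζ := by
  have hK : (0:ℝ) ≤ K := le_trans hε.le hεK
  set T := Finset.Icc (m - 1) (n + 1) with hT
  set S := runFinset l m n (discrep η ζ) with hS
  set Sp := runFinset (l + 1) m n (discrep η ζ) with hSp
  set A := Sp.image Prod.fst with hA
  set S₁ := fun x => runFinset l m n (discrep (flipAt η x) (flipAt ζ x)) with hS₁
  set S₂ := fun x => runFinset l m n (discrep (flipAt η x) ζ) with hS₂
  set S₃ := fun x => runFinset l m n (discrep η (flipAt ζ x)) with hS₃
  set r₁ := fun x => min (rate F x η) (rate F x ζ) with hr₁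
  set r₂ := fun x => rate F x η - min (rate F x η) (rate F x ζ) with hr₂
  set r₃ := fun x => rate F x ζ - min (rate F x η) (rate F x ζ) with hr₃
  have hrb : ∀ x : ℤ, ε ≤ r₁ x ∧ r₁ x ≤ K ∧ 0 ≤ r₂ x ∧ 0 ≤ r₃ x := by
    intro x
    obtain ⟨hη1, hη2⟩ := hF (η (x - 1)) (η x) (η (x + 1))
    obtain ⟨hζ1, hζ2⟩ := hF (ζ (x - 1)) (ζ x) (ζ (x + 1))
    have h1 : ε ≤ rate F x η := hη1
    have h2 : rate F x η ≤ K := hη2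
    have h3 : ε ≤ rate F x ζ := hζ1
    have h4 : rate F x ζ ≤ K := hζ2
    refine ⟨le_min h1 h3, (min_le_left _ _).trans h2, ?_, ?_⟩
    · simp only [hr₂, sub_nonneg]; exact min_le_left _ _
    · simp only [hr₃, sub_nonneg]; exact min_le_right _ _
  have homega : omegaG F l m n η ζ =
      ∑ x ∈ T, (r₁ x * (((S₁ x).card : ℝ) - (S.card : ℝ)) +
        r₂ x * (((S₂ x).card : ℝ) - (S.card : ℝ)) +
        r₃ x * (((S₃ x).card : ℝ) - (S.card : ℝ))) := by
    rw [omegaG]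
    apply Finset.sum_congr rfl
    intro x hx
    simp only [gPair, runCount_eq hl, hS, hS₁, hS₂, hS₃, hr₁, hr₂, hr₃]
  have hgl : (gPair l m n η ζ : ℝ) = (S.card : ℝ) := by
    rw [gPair, runCount_eq hl, hS]
  have hglp : (gPair (l + 1) m n η ζ : ℝ) = (Sp.card : ℝ) := by
    rw [gPair, runCount_eq (by omega), hSp]
  have hAcard : A.card = Sp.card := by
    apply Finset.card_image_of_injOn
    intro p hp q hq hpq
    rw [Finset.mem_coe, hSp, mem_runFinset (by omega)] at hp hq
    have hp2 : discrep η ζ p.1 = p.2 := by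
      have := hp.2.1 0 le_rfl (by omega); simpa using this
    have hq2 : discrep η ζ q.1 = q.2 := by
      have := hq.2.1 0 le_rfl (by omega); simpa using this
    exact Prod.ext hpq (by rw [← hp2, ← hq2, hpq])
  have hAT : A ⊆ T := by
    intro x hx
    obtain ⟨⟨a, s⟩, hp, rfl⟩ := Finset.mem_image.mp hx
    exact (creation hl hp).2.2
  have key : ∀ x ∈ T,
      ε * (if x ∈ A then (1:ℝ) else 0) -
        (r₁ x * (((S \ S₁ x).card : ℝ)) + r₂ x * (((S \ S₂ x).card : ℝ)) +
          r₃ x * (((S \ S₃ x).card : ℝ))) ≤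
      r₁ x * (((S₁ x).card : ℝ) - (S.card : ℝ)) + r₂ x * (((S₂ x).card : ℝ) - (S.card : ℝ)) +
        r₃ x * (((S₃ x).card : ℝ) - (S.card : ℝ)) := by
    intro x hx
    obtain ⟨h1, h2, h3, h4⟩ := hrb x
    have w₂ : -(((S \ S₂ x).card : ℝ)) ≤ ((S₂ x).card : ℝ) - (S.card : ℝ) := by
      have := card_lower₀ S (S₂ x); linarith
    have w₃ : -(((S \ S₃ x).card : ℝ)) ≤ ((S₃ x).card : ℝ) - (S.card : ℝ) := by
      have := card_lower₀ S (S₃ x); linarith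
    have m₂ := mul_le_mul_of_nonneg_left w₂ h3
    have m₃ := mul_le_mul_of_nonneg_left w₃ h4
    rw [mul_neg] at m₂ m₃
    by_cases hxA : x ∈ A
    · obtain ⟨⟨a, s⟩, hpSp, hpx⟩ := Finset.mem_image.mp hxA
      have hax : a = x := hpx
      subst hax
      obtain ⟨he1, he2, -⟩ := creation hl hpSp
      have w₁ : 1 - (((S \ S₁ a).card : ℝ)) ≤ ((S₁ a).card : ℝ) - (S.card : ℝ) := by
        have := card_lower (S := S) (S' := S₁ a) he1 he2; linarith
      have m₁ := mul_le_mul_of_nonneg_left w₁ (le_trans hε.le h1)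
      rw [if_pos hxA]
      have hexp : r₁ a * (1 - ((S \ S₁ a).card : ℝ)) =
          r₁ a - r₁ a * ((S \ S₁ a).card : ℝ) := by ring
      rw [hexp] at m₁
      linarith
    · rw [if_neg hxA]
      have w₁ : -(((S \ S₁ x).card : ℝ)) ≤ ((S₁ x).card : ℝ) - (S.card : ℝ) := by
        have := card_lower₀ S (S₁ x); linarith
      have m₁ := mul_le_mul_of_nonneg_left w₁ (le_trans hε.le h1)
      rw [mul_neg] at m₁
      linarith
  have hsum1 : ∑ x ∈ T, (if x ∈ A then (1:ℝ) else 0) = (Sp.card : ℝ) := by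
    rw [Finset.sum_boole, Finset.filter_mem_eq_inter, Finset.inter_eq_right.mpr hAT, hAcard]
  have hd : ∀ S' : Finset (ℤ × ℤ), ((S \ S').card : ℝ) =
      ∑ p ∈ S, (if p ∈ S' then (0:ℝ) else 1) := by
    intro S'
    rw [Finset.sdiff_eq_filter, Finset.card_filter]
    push_cast
    exact Finset.sum_congr rfl fun p _ => by by_cases h : p ∈ S' <;> simp [h]
  have hdest : ∑ x ∈ T, (r₁ x * (((S \ S₁ x).card : ℝ)) + r₂ x * (((S \ S₂ x).card : ℝ)) +
      r₃ x * (((S \ S₃ x).card : ℝ))) ≤ (2 * K * (l : ℝ) + 2 * K) * (S.card : ℝ) := by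
    have step1 : ∀ x ∈ T, r₁ x * (((S \ S₁ x).card : ℝ)) + r₂ x * (((S \ S₂ x).card : ℝ)) +
        r₃ x * (((S \ S₃ x).card : ℝ)) = ∑ p ∈ S,
          (r₁ x * (if p ∈ S₁ x then (0:ℝ) else 1) + r₂ x * (if p ∈ S₂ x then (0:ℝ) else 1) +
            r₃ x * (if p ∈ S₃ x then (0:ℝ) else 1)) := by
      intro x _
      rw [hd (S₁ x), hd (S₂ x), hd (S₃ x), Finset.mul_sum, Finset.mul_sum, Finset.mul_sum,
        ← Finset.sum_add_distrib, ← Finset.sum_add_distrib]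
    rw [Finset.sum_congr rfl step1, Finset.sum_comm]
    have step2 : ∀ p ∈ S, (∑ x ∈ T,
        (r₁ x * (if p ∈ S₁ x then (0:ℝ) else 1) + r₂ x * (if p ∈ S₂ x then (0:ℝ) else 1) +
          r₃ x * (if p ∈ S₃ x then (0:ℝ) else 1))) ≤ 2 * K * (l : ℝ) + 2 * K := by
      rintro ⟨a, s⟩ hp
      refine le_trans (Finset.sum_le_sum ?_) (weight_sum (a := a) (m := m) (n := n) hK hl)
      intro x _
      exact site_weight hε hεK hF hl η ζ hp x
    calc (∑ p ∈ S, ∑ x ∈ T,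
        (r₁ x * (if p ∈ S₁ x then (0:ℝ) else 1) + r₂ x * (if p ∈ S₂ x then (0:ℝ) else 1) +
          r₃ x * (if p ∈ S₃ x then (0:ℝ) else 1)))
        ≤ ∑ _p ∈ S, (2 * K * (l : ℝ) + 2 * K) := Finset.sum_le_sum step2
      _ = (S.card : ℝ) * (2 * K * (l : ℝ) + 2 * K) := by
          rw [Finset.sum_const, nsmul_eq_mul]
      _ = (2 * K * (l : ℝ) + 2 * K) * (S.card : ℝ) := by ring
  have hmain : ε * (Sp.card : ℝ) - (2 * K * (l : ℝ) + 2 * K) * (S.card : ℝ) ≤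
      omegaG F l m n η ζ := by
    rw [homega]
    have h := Finset.sum_le_sum key
    rw [Finset.sum_sub_distrib, ← Finset.mul_sum, hsum1] at h
    linarith
  rw [hglp, hgl]
  exact hmain

lemma runCount_local {l m n : ℤ} (hl : 1 ≤ l) {ξ ξ' : ℤ → ℤ}
    (h : ∀ y, m - 2 ≤ y → y ≤ n + 2 → ξ y = ξ' y) :
    runCount l m n ξ = runCount l m n ξ' := by
  have key : ∀ (ξ ξ' : ℤ → ℤ), (∀ y, m - 2 ≤ y → y ≤ n + 2 → ξ y = ξ' y) →
      ∀ a s : ℤ, IsMaxRun ξ l m n a s → IsMaxRun ξ' l m n a s := by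
    intro ξ ξ' h a s hr
    obtain ⟨hi, hb1, hb2, hma, han⟩ := hr
    refine ⟨?_, ?_, ?_, hma, han⟩
    · intro i h0 h1
      rw [← h (a + i) (by omega) (by omega)]
      exact hi i h0 h1
    · rw [← h (a - 1) (by omega) (by omega)]; exact hb1
    · rw [← h (a + l) (by omega) (by omega)]; exact hb2
  unfold runCount
  congr 1
  ext p
  simp only [Set.mem_setOf_eq]
  constructor
  · rintro ⟨hs, hr⟩; exact ⟨hs, key ξ ξ' h p.1 p.2 hr⟩
  · rintro ⟨hs, hr⟩
    exact ⟨hs, key ξ' ξ (fun y h1 h2 => (h y h1 h2).symm) p.1 p.2 hr⟩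

lemma gPair_local {l m n : ℤ} (hl : 1 ≤ l) {η η' ζ ζ' : ℤ → Bool}
    (hη : ∀ y, m - 2 ≤ y → y ≤ n + 2 → η y = η' y)
    (hζ : ∀ y, m - 2 ≤ y → y ≤ n + 2 → ζ y = ζ' y) :
    gPair l m n η ζ = gPair l m n η' ζ' := by
  apply runCount_local hl
  intro y h1 h2
  simp only [discrep, hη y h1 h2, hζ y h1 h2]

lemma omegaG_local {F : Bool → Bool → Bool → ℝ} {l m n : ℤ} (hl : 1 ≤ l)
    {η η' ζ ζ' : ℤ → Bool}
    (hη : ∀ y, m - 2 ≤ y → y ≤ n + 2 → η y = η' y)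
    (hζ : ∀ y, m - 2 ≤ y → y ≤ n + 2 → ζ y = ζ' y) :
    omegaG F l m n η ζ = omegaG F l m n η' ζ' := by
  unfold omegaG
  apply Finset.sum_congr rfl
  intro x hx
  rw [Finset.mem_Icc] at hx
  have hrη : rate F x η = rate F x η' := by
    unfold rate
    rw [hη (x - 1) (by omega) (by omega), hη x (by omega) (by omega),
      hη (x + 1) (by omega) (by omega)]
  have hrζ : rate F x ζ = rate F x ζ' := by
    unfold rate
    rw [hζ (x - 1) (by omega) (by omega), hζ x (by omega) (by omega),
      hζ (x + 1) (by omega) (by omega)]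
  have hflη : ∀ y, m - 2 ≤ y → y ≤ n + 2 → flipAt η x y = flipAt η' x y := by
    intro y h1 h2
    by_cases hxy : y = x
    · subst hxy; simp only [flipAt, Function.update_self, hη y h1 h2]
    · simp only [flipAt, Function.update_of_ne hxy, hη y h1 h2]
  have hflζ : ∀ y, m - 2 ≤ y → y ≤ n + 2 → flipAt ζ x y = flipAt ζ' x y := by
    intro y h1 h2
    by_cases hxy : y = x
    · subst hxy; simp only [flipAt, Function.update_self, hζ y h1 h2]
    · simp only [flipAt, Function.update_of_ne hxy, hζ y h1 h2]
  rw [hrη, hrζ, gPair_local hl hη hζ, gPair_local hl hflη hflζ,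
    gPair_local hl hflη hζ, gPair_local hl hη hflζ]

def extW (W : Finset ℤ) (u : {x // x ∈ W} → Bool) : ℤ → Bool :=
  fun x => if h : x ∈ W then u ⟨x, h⟩ else false

lemma extW_agree {m n : ℤ} (η : ℤ → Bool) :
    ∀ y, m - 2 ≤ y → y ≤ n + 2 →
      η y = extW (Finset.Icc (m - 2) (n + 2)) (fun i => η i) y := by
  intro y h1 h2
  have hy : y ∈ Finset.Icc (m - 2) (n + 2) := Finset.mem_Icc.mpr ⟨h1, h2⟩
  simp only [extW, dif_pos hy]

lemma measurable_restrict (W : Finset ℤ) :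
    Measurable (fun p : (ℤ → Bool) × (ℤ → Bool) =>
      ((fun i : {x // x ∈ W} => p.1 i, fun i : {x // x ∈ W} => p.2 i) :
        ({x // x ∈ W} → Bool) × ({x // x ∈ W} → Bool))) := by
  apply Measurable.prod
  · exact measurable_pi_lambda _ fun i => (measurable_pi_apply (i : ℤ)).comp measurable_fst
  · exact measurable_pi_lambda _ fun i => (measurable_pi_apply (i : ℤ)).comp measurable_snd

lemma measurable_gPair {l m n : ℤ} (hl : 1 ≤ l) :
    Measurable (fun p : (ℤ → Bool) × (ℤ → Bool) => (gPair l m n p.1 p.2 : ℝ)) := by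
  set W := Finset.Icc (m - 2) (n + 2) with hW
  have heq : (fun p : (ℤ → Bool) × (ℤ → Bool) => (gPair l m n p.1 p.2 : ℝ)) =
      (fun q : ({x // x ∈ W} → Bool) × ({x // x ∈ W} → Bool) =>
        (gPair l m n (extW W q.1) (extW W q.2) : ℝ)) ∘
      (fun p => (fun i => p.1 i, fun i => p.2 i)) := by
    funext p
    simp only [Function.comp_apply]
    congr 1
    exact gPair_local hl (extW_agree p.1) (extW_agree p.2)
  rw [heq]
  exact (measurable_of_finite _).comp (measurable_restrict W)

lemma measurable_omegaG {F : Bool → Bool → Bool → ℝ} {l m n : ℤ} (hl : 1 ≤ l) :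
    Measurable (fun p : (ℤ → Bool) × (ℤ → Bool) => omegaG F l m n p.1 p.2) := by
  set W := Finset.Icc (m - 2) (n + 2) with hW
  have heq : (fun p : (ℤ → Bool) × (ℤ → Bool) => omegaG F l m n p.1 p.2) =
      (fun q : ({x // x ∈ W} → Bool) × ({x // x ∈ W} → Bool) =>
        omegaG F l m n (extW W q.1) (extW W q.2)) ∘
      (fun p => (fun i => p.1 i, fun i => p.2 i)) := by
    funext p
    exact omegaG_local hl (extW_agree p.1) (extW_agree p.2)
  rw [heq]
  exact (measurable_of_finite _).comp (measurable_restrict W)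

lemma gPair_le {l m n : ℤ} (hl : 1 ≤ l) (η ζ : ℤ → Bool) :
    (gPair l m n η ζ : ℝ) ≤ ((Finset.Icc m n).card : ℝ) * 2 := by
  classical
  rw [gPair, runCount_eq hl]
  have h1 : (runFinset l m n (discrep η ζ)).card ≤
      (Finset.Icc m n ×ˢ ({1, -1} : Finset ℤ)).card := by
    apply Finset.card_le_card
    intro p hp
    exact Finset.mem_of_mem_filter p hp
  have h2 : (Finset.Icc m n ×ˢ ({1, -1} : Finset ℤ)).card ≤ (Finset.Icc m n).card * 2 := by
    rw [Finset.card_product]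
    have : ({1, -1} : Finset ℤ).card ≤ 2 := (Finset.card_insert_le _ _).trans (by simp)
    exact Nat.mul_le_mul_left _ this
  have := h1.trans h2
  calc ((runFinset l m n (discrep η ζ)).card : ℝ) ≤ (((Finset.Icc m n).card * 2 : ℕ) : ℝ) := by
        exact_mod_cast this
    _ = ((Finset.Icc m n).card : ℝ) * 2 := by push_cast; ring

lemma omegaG_abs_le {F : Bool → Bool → Bool → ℝ} {ε K : ℝ} (hε : 0 < ε) (hεK : ε ≤ K)
    (hF : ∀ u v w : Bool, ε ≤ F u v w ∧ F u v w ≤ K) {l m n : ℤ} (hl : 1 ≤ l)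
    (η ζ : ℤ → Bool) :
    |omegaG F l m n η ζ| ≤ ((Finset.Icc (m - 1) (n + 1)).card : ℝ) *
      (3 * K * (((Finset.Icc m n).card : ℝ) * 2)) := by
  set B := ((Finset.Icc m n).card : ℝ) * 2 with hB
  have hB0 : 0 ≤ B := by positivity
  have hK : (0:ℝ) ≤ K := hε.le.trans hεK
  rw [omegaG]
  refine (Finset.abs_sum_le_sum_abs _ _).trans ?_
  have hcard : ((Finset.Icc (m - 1) (n + 1)).card : ℝ) * (3 * K * B) =
      ∑ _x ∈ Finset.Icc (m - 1) (n + 1), (3 * K * B) := by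
    rw [Finset.sum_const, nsmul_eq_mul]
  rw [hcard]
  apply Finset.sum_le_sum
  intro x _
  obtain ⟨hη1, hη2⟩ := hF (η (x - 1)) (η x) (η (x + 1))
  obtain ⟨hζ1, hζ2⟩ := hF (ζ (x - 1)) (ζ x) (ζ (x + 1))
  have h1 : ε ≤ rate F x η := hη1
  have h2 : rate F x η ≤ K := hη2
  have h3 : ε ≤ rate F x ζ := hζ1
  have h4 : rate F x ζ ≤ K := hζ2
  have hmin0 : 0 ≤ min (rate F x η) (rate F x ζ) := le_min (by linarith) (by linarith)
  have habs : ∀ r g g' : ℝ, 0 ≤ r → r ≤ K → 0 ≤ g → g ≤ B → 0 ≤ g' → g' ≤ B →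
      |r * (g' - g)| ≤ K * B := by
    intro r g g' hr0 hrK hg0 hgB hg'0 hg'B
    rw [abs_mul, abs_of_nonneg hr0]
    exact mul_le_mul hrK (abs_le.mpr ⟨by linarith, by linarith⟩) (abs_nonneg _) hK
  have hg0 : (0:ℝ) ≤ (gPair l m n η ζ : ℝ) := Nat.cast_nonneg _
  have hgB := gPair_le (m := m) (n := n) hl η ζ
  have t1 := habs _ _ _ hmin0 ((min_le_left _ _).trans h2) hg0 hgB (Nat.cast_nonneg _)
    (gPair_le (m := m) (n := n) hl (flipAt η x) (flipAt ζ x))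
  have t2 := habs _ _ _ (by linarith [min_le_left (rate F x η) (rate F x ζ)] : (0:ℝ) ≤ rate F x η - min (rate F x η) (rate F x ζ)) (by linarith) hg0 hgB (Nat.cast_nonneg _)
    (gPair_le (m := m) (n := n) hl (flipAt η x) ζ)
  have t3 := habs _ _ _ (by linarith [min_le_right (rate F x η) (rate F x ζ)] : (0:ℝ) ≤ rate F x ζ - min (rate F x η) (rate F x ζ)) (by linarith) hg0 hgB (Nat.cast_nonneg _)
    (gPair_le (m := m) (n := n) hl η (flipAt ζ x))
  calc |min (rate F x η) (rate F x ζ) *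
        ((gPair l m n (flipAt η x) (flipAt ζ x) : ℝ) - (gPair l m n η ζ : ℝ)) +
      (rate F x η - min (rate F x η) (rate F x ζ)) *
        ((gPair l m n (flipAt η x) ζ : ℝ) - (gPair l m n η ζ : ℝ)) +
      (rate F x ζ - min (rate F x η) (rate F x ζ)) *
        ((gPair l m n η (flipAt ζ x) : ℝ) - (gPair l m n η ζ : ℝ))|
      ≤ |min (rate F x η) (rate F x ζ) *
        ((gPair l m n (flipAt η x) (flipAt ζ x) : ℝ) - (gPair l m n η ζ : ℝ))| +
      |(rate F x η - min (rate F x η) (rate F x ζ)) *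
        ((gPair l m n (flipAt η x) ζ : ℝ) - (gPair l m n η ζ : ℝ))| +
      |(rate F x ζ - min (rate F x η) (rate F x ζ)) *
        ((gPair l m n η (flipAt ζ x) : ℝ) - (gPair l m n η ζ : ℝ))| := by
        exact abs_add_three _ _ _
    _ ≤ 3 * K * B := by linarith
open MeasureTheory in
theorem integral_estimate (F : Bool → Bool → Bool → ℝ) (ε K : ℝ)
    (hε : 0 < ε) (hεK : ε ≤ K)
    (hF : ∀ u v w : Bool, ε ≤ F u v w ∧ F u v w ≤ K)
    (ν : Measure ((ℤ → Bool) × (ℤ → Bool))) [IsProbabilityMeasure ν]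
    (l m n : ℤ) (hl : 1 ≤ l) (hmn : m ≤ n)
    (hinv : ∫ p, omegaG F l m n p.1 p.2 ∂ν = 0) :
    ε * ∫ p, (gPair (l + 1) m n p.1 p.2 : ℝ) ∂ν ≤
      (4 * K * (l : ℝ) + 2 * ε) * ∫ p, (gPair l m n p.1 p.2 : ℝ) ∂ν := by
  have hK : (0:ℝ) ≤ K := hε.le.trans hεK
  set B : ℝ := ((Finset.Icc m n).card : ℝ) * 2 with hB
  have hB0 : (0:ℝ) ≤ B := by positivity
  set C : ℝ := ((Finset.Icc (m - 1) (n + 1)).card : ℝ) * (3 * K * B) with hC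
  -- integrability
  have hml : Measurable (fun p : (ℤ → Bool) × (ℤ → Bool) => (gPair l m n p.1 p.2 : ℝ)) :=
    measurable_gPair hl
  have hmlp : Measurable (fun p : (ℤ → Bool) × (ℤ → Bool) => (gPair (l + 1) m n p.1 p.2 : ℝ)) :=
    measurable_gPair (by omega)
  have hmo : Measurable (fun p : (ℤ → Bool) × (ℤ → Bool) => omegaG F l m n p.1 p.2) :=
    measurable_omegaG hl
  have hintl : Integrable (fun p : (ℤ → Bool) × (ℤ → Bool) => (gPair l m n p.1 p.2 : ℝ)) ν := by
    refine Integrable.mono' (integrable_const B) hml.aestronglyMeasurable ?_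
    filter_upwards with p
    rw [Real.norm_eq_abs, abs_of_nonneg (Nat.cast_nonneg _)]
    exact gPair_le hl p.1 p.2
  have hintlp : Integrable (fun p : (ℤ → Bool) × (ℤ → Bool) =>
      (gPair (l + 1) m n p.1 p.2 : ℝ)) ν := by
    refine Integrable.mono' (integrable_const B) hmlp.aestronglyMeasurable ?_
    filter_upwards with p
    rw [Real.norm_eq_abs, abs_of_nonneg (Nat.cast_nonneg _)]
    exact gPair_le (by omega) p.1 p.2
  have hinto : Integrable (fun p : (ℤ → Bool) × (ℤ → Bool) => omegaG F l m n p.1 p.2) ν := by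
    refine Integrable.mono' (integrable_const C) hmo.aestronglyMeasurable ?_
    filter_upwards with p
    rw [Real.norm_eq_abs]
    exact omegaG_abs_le hε hεK hF hl p.1 p.2
  -- pointwise bound and integration
  have hpt : ∀ p : (ℤ → Bool) × (ℤ → Bool),
      0 ≤ omegaG F l m n p.1 p.2 - (ε * (gPair (l + 1) m n p.1 p.2 : ℝ) -
        (2 * K * (l : ℝ) + 2 * K) * (gPair l m n p.1 p.2 : ℝ)) := by
    intro p
    have := pointwise_bound (m := m) (n := n) hε hεK hF hl p.1 p.2
    linarith
  have hint2 : Integrable (fun p : (ℤ → Bool) × (ℤ → Bool) =>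
      ε * (gPair (l + 1) m n p.1 p.2 : ℝ) -
        (2 * K * (l : ℝ) + 2 * K) * (gPair l m n p.1 p.2 : ℝ)) ν :=
    (hintlp.const_mul ε).sub (hintl.const_mul _)
  have hnn : 0 ≤ ∫ p, (omegaG F l m n p.1 p.2 - (ε * (gPair (l + 1) m n p.1 p.2 : ℝ) -
      (2 * K * (l : ℝ) + 2 * K) * (gPair l m n p.1 p.2 : ℝ))) ∂ν :=
    integral_nonneg hpt
  rw [integral_sub hinto hint2, hinv, integral_sub (hintlp.const_mul ε) (hintl.const_mul _),
    MeasureTheory.integral_const_mul, MeasureTheory.integral_const_mul] at hnn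
  set IA := ∫ p, (gPair (l + 1) m n p.1 p.2 : ℝ) ∂ν with hIA
  set IB := ∫ p, (gPair l m n p.1 p.2 : ℝ) ∂ν with hIB
  have hIB0 : 0 ≤ IB := integral_nonneg fun p => Nat.cast_nonneg _
  have hl' : (1:ℝ) ≤ (l:ℝ) := by exact_mod_cast hl
  have hcoef : 2 * K * (l:ℝ) + 2 * K ≤ 4 * K * (l:ℝ) + 2 * ε := by nlinarith
  have : ε * IA ≤ (2 * K * (l:ℝ) + 2 * K) * IB := by linarith
  calc ε * IA ≤ (2 * K * (l:ℝ) + 2 * K) * IB := this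
    _ ≤ (4 * K * (l:ℝ) + 2 * ε) * IB := mul_le_mul_of_nonneg_right hcoef hIB0
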